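/- Let c : E(K_n) → {−1,1} be zero-sum and let H be a Δ-regular spanning subgraph of K_n with c(E(H)) > 0. Then there exist distinct vertices u, v such that c(E(H_{uv})) < c(E(H)), where H_{uv} is the copy of H with the roles of u and v exchanged. -/

import Mathlib

open Finset

/-- `swapGraph H u v` is the isomorphic copy `H_{uv}` of `H` in which the vertices `u` and `v`
have exchanged their roles. -/
def swapGraph {V : Type*} [DecidableEq V] (H : SimpleGraph V) (u v : V) : SimpleGraph V where
  Adj a b := H.Adj (Equiv.swap u v a) (Equiv.swap u v b)
  symm := ⟨fun a b h => H.adj_symm h⟩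
  loopless := ⟨fun a h => H.ne_of_adj h rfl⟩

instance {V : Type*} [DecidableEq V] (H : SimpleGraph V) [DecidableRel H.Adj] (u v : V) :
    DecidableRel (swapGraph H u v).Adj :=
  fun a b => inferInstanceAs (Decidable (H.Adj (Equiv.swap u v a) (Equiv.swap u v b)))

private lemma fiber_eq {V : Type*} [Fintype V] [DecidableEq V] (G : SimpleGraph V)
    [DecidableRel G.Adj] (x y : V) (hxy : G.Adj x y) :
    ((univ.filter fun p : V × V => G.Adj p.1 p.2).filter fun p => s(p.1, p.2) = s(x, y))
      = {(x, y), (y, x)} := by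
  ext ⟨p1, p2⟩
  simp only [mem_filter, mem_univ, true_and, mem_insert, mem_singleton, Prod.mk.injEq,
    Sym2.eq_iff]
  constructor
  · rintro ⟨-, h⟩; exact h
  · rintro (⟨rfl, rfl⟩ | ⟨rfl, rfl⟩)
    · exact ⟨hxy, Or.inl ⟨rfl, rfl⟩⟩
    · exact ⟨hxy.symm, Or.inr ⟨rfl, rfl⟩⟩

/-- The sum of an edge weight over ordered adjacent pairs is twice the sum over edges. -/
private lemma adjSum_eq {V : Type*} [Fintype V] [DecidableEq V] (c : Sym2 V → ℝ)
    (G : SimpleGraph V) [DecidableRel G.Adj] :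
    ∑ a, ∑ b, (if G.Adj a b then c s(a, b) else 0) = 2 * ∑ e ∈ G.edgeFinset, c e := by
  have h0 : ∑ a, ∑ b, (if G.Adj a b then c s(a, b) else 0)
      = ∑ p ∈ (univ.filter fun p : V × V => G.Adj p.1 p.2), c s(p.1, p.2) := by
    rw [sum_filter, ← Finset.univ_product_univ, Finset.sum_product]
  rw [h0, ← Finset.sum_fiberwise_of_maps_to
      (g := fun p : V × V => s(p.1, p.2)) (t := G.edgeFinset)
      (fun p hp => by
        simp only [mem_filter, mem_univ, true_and] at hp
        simpa [SimpleGraph.mem_edgeFinset] using hp), Finset.mul_sum]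
  refine Finset.sum_congr rfl fun e he => ?_
  induction e with
  | _ x y =>
    have hxy : G.Adj x y := by simpa [SimpleGraph.mem_edgeFinset] using he
    have hne : x ≠ y := hxy.ne
    rw [fiber_eq G x y hxy, Finset.sum_pair (by simp [Prod.ext_iff, hne])]
    have : s(y, x) = s(x, y) := Sym2.eq_swap
    rw [this]; ring

private lemma sum_split {V : Type*} [Fintype V] [DecidableEq V] {a b : V} (hab : a ≠ b)
    (f : V → ℝ) :
    ∑ u, f u = f a + (f b + ∑ u ∈ (univ.erase a).erase b, f u) := by
  rw [← Finset.add_sum_erase _ f (mem_univ a),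
    ← Finset.add_sum_erase _ f (Finset.mem_erase.2 ⟨hab.symm, mem_univ b⟩)]

/-- If `c` is a zero-sum `±1`-labeling of `K_n` and `H` is a `Δ`-regular spanning subgraph of
`K_n` with `c(E(H)) > 0`, then there are distinct vertices `u, v` with
`c(E(H_{uv})) < c(E(H))`. -/
theorem exists_improving_swap (n Δ : ℕ) (c : Sym2 (Fin n) → ℝ)
    (hc : ∀ e ∈ (⊤ : SimpleGraph (Fin n)).edgeFinset, c e = 1 ∨ c e = -1)
    (hzero : ∑ e ∈ (⊤ : SimpleGraph (Fin n)).edgeFinset, c e = 0)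
    (H : SimpleGraph (Fin n)) [DecidableRel H.Adj] (hreg : H.IsRegularOfDegree Δ)
    (hpos : 0 < ∑ e ∈ H.edgeFinset, c e) :
    ∃ u v : Fin n, u ≠ v ∧
      ∑ e ∈ (swapGraph H u v).edgeFinset, c e < ∑ e ∈ H.edgeFinset, c e := by
  classical
  set W := ∑ e ∈ H.edgeFinset, c e with hW
  -- the "directed" weight of H
  set P : ℝ := ∑ a, ∑ b, (if H.Adj a b then c s(a, b) else 0) with hP
  have hPW : P = 2 * W := adjSum_eq c H
  -- the local vertex sums
  set d : Fin n → ℝ := fun x => ∑ v ∈ univ.erase x, c s(x, v) with hd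
  -- total of all local sums is zero (by the zero-sum hypothesis)
  have hdzero : ∑ x, d x = 0 := by
    have h1 : ∑ x, d x
        = ∑ a, ∑ b, (if (⊤ : SimpleGraph (Fin n)).Adj a b then c s(a, b) else 0) := by
      refine Finset.sum_congr rfl fun x _ => ?_
      show ∑ v ∈ univ.erase x, c s(x, v) = _
      have : (univ.erase x) = univ.filter fun v => (⊤ : SimpleGraph (Fin n)).Adj x v := by
        ext v; simp [eq_comm, Ne]
      rw [this, sum_filter]
    rw [h1, adjSum_eq c ⊤, hzero, mul_zero]
  -- degrees: summing a constant over neighbours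
  have hdeg : ∀ (a : Fin n) (x : ℝ), ∑ b, (if H.Adj a b then x else 0) = (Δ : ℝ) * x := by
    intro a x
    rw [← sum_filter]
    have : (univ.filter fun b => H.Adj a b) = H.neighborFinset a := by
      ext b; simp [SimpleGraph.mem_neighborFinset]
    rw [this, Finset.sum_const, SimpleGraph.card_neighborFinset_eq_degree, hreg a, nsmul_eq_mul]
  -- the cardinality of the complement of a pair
  have hmcard : ∀ a b : Fin n, a ≠ b → (((univ.erase a).erase b).card : ℝ) = ((n : ℝ) - 2) := by
    intro a b hab
    rw [Finset.card_erase_of_mem (Finset.mem_erase.2 ⟨hab.symm, mem_univ b⟩),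
      Finset.card_erase_of_mem (mem_univ a), Finset.card_univ, Fintype.card_fin]
    have hn2 : 2 ≤ n := by
      have := Fintype.one_lt_card_iff_nontrivial.2 ⟨⟨a, b, hab⟩⟩
      simp at this; omega
    rw [show n - 1 - 1 = n - 2 from by omega, Nat.cast_sub hn2]
    norm_num
  -- key local computation: the sum over all (u,v) of the swapped weight of a fixed edge
  have key : ∀ a b : Fin n, H.Adj a b →
      ∑ u, ∑ v, c s(Equiv.swap u v a, Equiv.swap u v b)
        = 2 * d a + 2 * d b + ((n : ℝ) - 2) ^ 2 * c s(a, b) := by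
    intro a b hab
    have hne : a ≠ b := hab.ne
    have hcard := hmcard a b hne
    rw [sum_split hne (fun u => ∑ v, c s(Equiv.swap u v a, Equiv.swap u v b))]
    beta_reduce
    have fa : ∑ v, c s(Equiv.swap a v a, Equiv.swap a v b) = c s(a, b) + d b := by
      rw [← Finset.add_sum_erase _ _ (mem_univ b)]
      congr 1
      · rw [Equiv.swap_apply_left, Equiv.swap_apply_right]
        exact congrArg c Sym2.eq_swap
      · refine Finset.sum_congr rfl fun v hv => ?_
        have hvb : v ≠ b := (Finset.mem_erase.1 hv).1
        rw [Equiv.swap_apply_left, Equiv.swap_apply_of_ne_of_ne hne.symm hvb.symm]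
        exact congrArg c Sym2.eq_swap
    have fb : ∑ v, c s(Equiv.swap b v a, Equiv.swap b v b) = c s(a, b) + d a := by
      rw [← Finset.add_sum_erase _ _ (mem_univ a)]
      congr 1
      · rw [Equiv.swap_apply_left, Equiv.swap_apply_right]
        exact congrArg c Sym2.eq_swap
      · refine Finset.sum_congr rfl fun v hv => ?_
        have hva : v ≠ a := (Finset.mem_erase.1 hv).1
        rw [Equiv.swap_apply_left, Equiv.swap_apply_of_ne_of_ne hne hva.symm]
    have fS : ∑ u ∈ (univ.erase a).erase b, (∑ v, c s(Equiv.swap u v a, Equiv.swap u v b))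
        = (d b - c s(a, b)) + ((d a - c s(a, b)) + ((n : ℝ) - 2) * (((n : ℝ) - 2) * c s(a, b))) := by
      have step : ∀ u ∈ (univ.erase a).erase b,
          (∑ v, c s(Equiv.swap u v a, Equiv.swap u v b))
            = c s(b, u) + (c s(a, u) + ((n : ℝ) - 2) * c s(a, b)) := by
        intro u hu
        have hub : u ≠ b := (Finset.mem_erase.1 hu).1
        have hua : u ≠ a := (Finset.mem_erase.1 (Finset.mem_erase.1 hu).2).1
        rw [sum_split hne (fun v => c s(Equiv.swap u v a, Equiv.swap u v b))]
        beta_reduce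
        congr 1
        · rw [Equiv.swap_apply_right, Equiv.swap_apply_of_ne_of_ne hub.symm hne.symm]
          exact congrArg c Sym2.eq_swap
        · congr 1
          · rw [Equiv.swap_apply_of_ne_of_ne hua.symm hne, Equiv.swap_apply_right]
          · rw [show ((n : ℝ) - 2) * c s(a, b)
                = (((univ.erase a).erase b).card : ℝ) * c s(a, b) by rw [hcard],
              ← nsmul_eq_mul, ← Finset.sum_const]
            refine Finset.sum_congr rfl fun v hv => ?_
            have hvb : v ≠ b := (Finset.mem_erase.1 hv).1
            have hva : v ≠ a := (Finset.mem_erase.1 (Finset.mem_erase.1 hv).2).1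
            rw [Equiv.swap_apply_of_ne_of_ne hua.symm hva.symm,
              Equiv.swap_apply_of_ne_of_ne hub.symm hvb.symm]
      rw [Finset.sum_congr rfl step]
      rw [Finset.sum_add_distrib, Finset.sum_add_distrib, Finset.sum_const, nsmul_eq_mul, hcard]
      congr 1
      · rw [Finset.erase_right_comm,
          Finset.sum_erase_eq_sub (Finset.mem_erase.2 ⟨hne, mem_univ a⟩)]
        rw [show c s(b, a) = c s(a, b) from congrArg c Sym2.eq_swap]
      · congr 1
        rw [Finset.sum_erase_eq_sub (Finset.mem_erase.2 ⟨hne.symm, mem_univ b⟩)]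
    rw [fa, fb, fS]
    ring
  -- the ordered-pair weight of the swapped graph
  have hswap : ∀ u v : Fin n, 2 * (∑ e ∈ (swapGraph H u v).edgeFinset, c e)
      = ∑ a, ∑ b, (if H.Adj a b then c s(Equiv.swap u v a, Equiv.swap u v b) else 0) := by
    intro u v
    rw [← adjSum_eq c (swapGraph H u v)]
    refine Fintype.sum_equiv (Equiv.swap u v) _ _ fun x => ?_
    refine Fintype.sum_equiv (Equiv.swap u v) _ _ fun y => ?_
    simp only [Equiv.swap_apply_self]
    rfl
  -- summing over all ordered pairs (u, v)
  have T : ∑ u : Fin n, ∑ v : Fin n,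
      (∑ a, ∑ b, (if H.Adj a b then c s(Equiv.swap u v a, Equiv.swap u v b) else 0))
      = ((n : ℝ) - 2) ^ 2 * P := by
    have comm : ∑ u : Fin n, ∑ v : Fin n,
        (∑ a, ∑ b, (if H.Adj a b then c s(Equiv.swap u v a, Equiv.swap u v b) else 0))
        = ∑ a, ∑ b,
            (∑ u : Fin n, ∑ v : Fin n,
              (if H.Adj a b then c s(Equiv.swap u v a, Equiv.swap u v b) else 0)) := by
      calc ∑ u : Fin n, ∑ v : Fin n, ∑ a, ∑ b,
            (if H.Adj a b then c s(Equiv.swap u v a, Equiv.swap u v b) else 0)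
          = ∑ u : Fin n, ∑ a, ∑ v : Fin n, ∑ b,
            (if H.Adj a b then c s(Equiv.swap u v a, Equiv.swap u v b) else 0) :=
            Finset.sum_congr rfl fun u _ => Finset.sum_comm
        _ = ∑ a, ∑ u : Fin n, ∑ v : Fin n, ∑ b,
            (if H.Adj a b then c s(Equiv.swap u v a, Equiv.swap u v b) else 0) :=
            Finset.sum_comm
        _ = ∑ a, ∑ u : Fin n, ∑ b, ∑ v : Fin n,
            (if H.Adj a b then c s(Equiv.swap u v a, Equiv.swap u v b) else 0) :=
            Finset.sum_congr rfl fun a _ => Finset.sum_congr rfl fun u _ => Finset.sum_comm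
        _ = ∑ a, ∑ b, ∑ u : Fin n, ∑ v : Fin n,
            (if H.Adj a b then c s(Equiv.swap u v a, Equiv.swap u v b) else 0) :=
            Finset.sum_congr rfl fun a _ => Finset.sum_comm
    rw [comm]
    have inner : ∀ a b : Fin n,
        (∑ u : Fin n, ∑ v : Fin n,
          (if H.Adj a b then c s(Equiv.swap u v a, Equiv.swap u v b) else 0))
        = (if H.Adj a b then 2 * d a else 0) + ((if H.Adj a b then 2 * d b else 0)
            + (if H.Adj a b then ((n : ℝ) - 2) ^ 2 * c s(a, b) else 0)) := by
      intro a b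
      by_cases hab : H.Adj a b
      · simp only [if_pos hab]
        rw [key a b hab]
        ring
      · simp [if_neg hab]
    rw [Finset.sum_congr rfl fun a _ => Finset.sum_congr rfl fun b _ => inner a b]
    simp only [Finset.sum_add_distrib]
    have e1 : ∑ a, ∑ b, (if H.Adj a b then 2 * d a else 0) = 0 := by
      rw [Finset.sum_congr rfl fun a _ => hdeg a (2 * d a),
        Finset.sum_congr rfl fun a (_ : a ∈ univ) =>
          (show (Δ : ℝ) * (2 * d a) = ((Δ : ℝ) * 2) * d a by ring),
        ← Finset.mul_sum, hdzero, mul_zero]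
    have e2 : ∑ a, ∑ b, (if H.Adj a b then 2 * d b else 0) = 0 := by
      rw [Finset.sum_comm,
        Finset.sum_congr rfl fun b (_ : b ∈ univ) => Finset.sum_congr rfl
          fun a (_ : a ∈ univ) =>
            (if_congr ⟨SimpleGraph.Adj.symm, SimpleGraph.Adj.symm⟩ rfl rfl :
              (if H.Adj a b then 2 * d b else 0) = (if H.Adj b a then 2 * d b else 0)),
        Finset.sum_congr rfl fun b _ => hdeg b (2 * d b),
        Finset.sum_congr rfl fun b (_ : b ∈ univ) =>
          (show (Δ : ℝ) * (2 * d b) = ((Δ : ℝ) * 2) * d b by ring),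
        ← Finset.mul_sum, hdzero, mul_zero]
    have e3 : ∑ a, ∑ b, (if H.Adj a b then ((n : ℝ) - 2) ^ 2 * c s(a, b) else 0)
        = ((n : ℝ) - 2) ^ 2 * P := by
      rw [hP, Finset.mul_sum]
      refine Finset.sum_congr rfl fun a _ => ?_
      rw [Finset.mul_sum]
      exact Finset.sum_congr rfl fun b _ => by rw [mul_ite, mul_zero]
    rw [e1, e2, e3]
    ring
  -- conclusion: averaging
  by_contra hcon
  push_neg at hcon
  have hall : ∀ u v : Fin n, P ≤ 2 * ∑ e ∈ (swapGraph H u v).edgeFinset, c e := by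
    intro u v
    rcases eq_or_ne u v with rfl | huv
    · have hG : swapGraph H u u = H := by
        ext a b
        show H.Adj (Equiv.swap u u a) (Equiv.swap u u b) ↔ H.Adj a b
        simp [Equiv.swap_self]
      have hE : (swapGraph H u u).edgeFinset = H.edgeFinset := by
        ext e
        rw [SimpleGraph.mem_edgeFinset, SimpleGraph.mem_edgeFinset, hG]
      rw [hE, hPW]
    · have h := hcon u v huv
      rw [hPW]
      linarith
  have hsum : ∑ u : Fin n, ∑ v : Fin n, P ≤ ((n : ℝ) - 2) ^ 2 * P := by
    rw [← T]
    refine Finset.sum_le_sum fun u _ => Finset.sum_le_sum fun v _ => ?_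
    rw [← hswap u v]
    exact hall u v
  have hP0 : 0 < P := by rw [hPW]; linarith
  have hn2 : 2 ≤ n := by
    obtain ⟨e, he⟩ : H.edgeFinset.Nonempty := by
      by_contra h
      rw [Finset.not_nonempty_iff_eq_empty] at h
      have := hpos
      rw [hW, h, Finset.sum_empty] at this
      exact lt_irrefl 0 this
    induction e with
    | _ x y =>
      have hxy : H.Adj x y := by
        rw [SimpleGraph.mem_edgeFinset] at he
        exact he
      have := Fintype.one_lt_card_iff_nontrivial.2 ⟨⟨x, y, hxy.ne⟩⟩
      simp at this; omega
  have hL : ∑ u : Fin n, ∑ v : Fin n, P = (n : ℝ) * ((n : ℝ) * P) := by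
    simp [Finset.sum_const, Finset.card_univ, nsmul_eq_mul]
  rw [hL] at hsum
  have hn2R : (2 : ℝ) ≤ (n : ℝ) := by exact_mod_cast hn2
  nlinarith [hsum, hP0, hn2R]
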